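/- arXiv:0812.4902 — 10 statements merged into one kernel-verified Lean document; each statement's English description precedes it below -/
import Mathlib

section
/- Let A₁, A₂ : Ŵ → W be R-linear and skew-adjoint. Let f ∈ W, w ∈ Ŵ, and let ψ : ℕ → Ŵ be a sequence such that A₁(ψᵢ) = A₂(ψᵢ₊₁) for all i (an abstract Magri hierarchy: ψᵢ plays the role of the variational derivative of the conserved density Hᵢ of the evolution equation uₜ = f with Hamiltonian operators A₁, A₂). Assume ⟨ψᵢ, f⟩ = 0 for all i (each Hᵢ is a conserved density for uₜ = f) and A₂(w) = 0. Then ⟨ψᵢ, f + A₁(w)⟩ = 0 for all i; that is, every Hᵢ is a conserved density for the Kupershmidt deformation uₜ = f + A₁(w), A₂(w) = 0. (Kupershmidt's theorem.) -/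
/-- Kupershmidt's theorem, abstract form: if `A₁, A₂` are skew-adjoint,
`ψ` is an abstract Magri hierarchy (`A₁ ψᵢ = A₂ ψᵢ₊₁`), each `ψᵢ` pairs to zero with `f`,
and `A₂ w = 0`, then `⟨ψᵢ, f + A₁ w⟩ = 0` for all `i`. -/
theorem kupershmidt_conserved_densities
    {R W What Lambda : Type*} [CommRing R]
    [AddCommGroup W] [Module R W] [AddCommGroup What] [Module R What]
    [AddCommGroup Lambda] [Module R Lambda]
    (pair : What →ₗ[R] W →ₗ[R] Lambda)
    (A₁ A₂ : What →ₗ[R] W)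
    (hA₁ : ∀ ψ χ : What, pair ψ (A₁ χ) = - pair χ (A₁ ψ))
    (hA₂ : ∀ ψ χ : What, pair ψ (A₂ χ) = - pair χ (A₂ ψ))
    (f : W) (w : What) (ψ : ℕ → What)
    (hMagri : ∀ i : ℕ, A₁ (ψ i) = A₂ (ψ (i + 1)))
    (hcons : ∀ i : ℕ, pair (ψ i) f = 0)
    (hw : A₂ w = 0) :
    ∀ i : ℕ, pair (ψ i) (f + A₁ w) = 0 := by
  intro i
  have key : pair (ψ i) (A₁ w) = 0 := by
    rw [hA₁ (ψ i) w, hMagri i, hA₂ w (ψ (i+1)), hw]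
    simp
  rw [map_add, hcons i, key, add_zero]
end

section
/- Let F ∈ P, w ∈ κ̂. Let ℓ_F : κ → P have adjoint ℓ_F* : P̂ → κ̂, let A₁ : P̂ → κ have adjoint A₁* : κ̂ → P, let D₁ : κ → P (abstracting the linearization ℓ_{A₁*(w)}), let E₁ : P̂ → End_R(κ) assign to each ψ an R-linear operator E₁(ψ) (abstracting ℓ_{A₁,ψ}) with G₁(ψ) : κ̂ → κ̂ satisfying ⟨G₁(ψ)(χ), φ⟩_κ = ⟨χ, E₁(ψ)(φ)⟩_κ for all χ, φ, and let B₁* : P̂ × P̂ → P̂. Assume: (i) ⟨ψ₂, ℓ_F(A₁ψ₁) − A₁*(ℓ_F*ψ₁)⟩_P = ⟨B₁*(ψ₂,ψ₁), F⟩_P for all ψ₁, ψ₂ (the defect of A₁ against ℓ_F is B₁(F,·), with B₁* adjoint in the first argument); (ii) ⟨ψ, D₁(φ)⟩_P = ⟨G₁(ψ)(w), φ⟩_κ for all ψ ∈ P̂, φ ∈ κ; (iii) E₁(α)(A₁β) − E₁(β)(A₁α) = A₁(B₁*(α,β)) for all α, β ∈ P̂ (A₁ is Hamiltonian). Then for all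 ψ₁, ψ₂ ∈ P̂: ⟨ψ₂, ℓ_F(A₁ψ₁) + D₁(A₁ψ₁)⟩_P − ⟨ψ₁, ℓ_F(A₁ψ₂) + D₁(A₁ψ₂)⟩_P = ⟨B₁*(ψ₂,ψ₁), F + A₁*(w)⟩_P. (Pairing-level form of identity (12) of Lemma 3: ℓ_{F+A₁*(w)}∘A₁ − A₁*∘ℓ*_{F+A₁*(w)} = B₁(F+A₁*(w), ·).) -/
/-- pairing-level form of identity (12) of Lemma 3:
`ℓ_{F+A₁*(w)} ∘ A₁ − A₁* ∘ ℓ*_{F+A₁*(w)} = B₁(F + A₁*(w), ·)`. -/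
theorem kupershmidt_lemma3_eq12
    {R P Phat K Khat Lambda : Type*} [CommRing R]
    [AddCommGroup P] [Module R P] [AddCommGroup Phat] [Module R Phat]
    [AddCommGroup K] [Module R K] [AddCommGroup Khat] [Module R Khat]
    [AddCommGroup Lambda] [Module R Lambda]
    (pP : Phat →ₗ[R] P →ₗ[R] Lambda) (pK : Khat →ₗ[R] K →ₗ[R] Lambda)
    (F : P) (w : Khat)
    (lF : K →ₗ[R] P) (lFs : Phat →ₗ[R] Khat)
    (hlF : ∀ (ψ : Phat) (φ : K), pP ψ (lF φ) = pK (lFs ψ) φ)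
    (A₁ : Phat →ₗ[R] K) (A₁s : Khat →ₗ[R] P)
    (hA₁ : ∀ (ψ : Phat) (χ : Khat), pP ψ (A₁s χ) = pK χ (A₁ ψ))
    (D₁ : K →ₗ[R] P)
    (E₁ : Phat → Module.End R K)
    (G₁ : Phat → Khat → Khat)
    (hG₁ : ∀ (ψ : Phat) (χ : Khat) (φ : K), pK (G₁ ψ χ) φ = pK χ (E₁ ψ φ))
    (B₁s : Phat → Phat → Phat)
    (hi : ∀ ψ₁ ψ₂ : Phat,
      pP ψ₂ (lF (A₁ ψ₁) - A₁s (lFs ψ₁)) = pP (B₁s ψ₂ ψ₁) F)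
    (hii : ∀ (ψ : Phat) (φ : K), pP ψ (D₁ φ) = pK (G₁ ψ w) φ)
    (hiii : ∀ α β : Phat, E₁ α (A₁ β) - E₁ β (A₁ α) = A₁ (B₁s α β)) :
    ∀ ψ₁ ψ₂ : Phat,
      pP ψ₂ (lF (A₁ ψ₁) + D₁ (A₁ ψ₁)) - pP ψ₁ (lF (A₁ ψ₂) + D₁ (A₁ ψ₂))
        = pP (B₁s ψ₂ ψ₁) (F + A₁s w) := by
  intro ψ₁ ψ₂
  have h2 : pP (B₁s ψ₂ ψ₁) (A₁s w)
      = pP ψ₂ (D₁ (A₁ ψ₁)) - pP ψ₁ (D₁ (A₁ ψ₂)) := by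
    rw [hA₁, ← hiii, LinearMap.map_sub, ← hG₁, ← hG₁, ← hii, ← hii]
  have h1 := hi ψ₁ ψ₂
  rw [map_sub, hA₁, ← hlF] at h1
  simp only [map_add]
  linear_combination (norm := abel) h1 - h2
end

section
/- Let F ∈ P, w ∈ κ̂. Let ℓ_F : κ → P have adjoint ℓ_F* : P̂ → κ̂, let A₁, A₂ : P̂ → κ have adjoints A₁*, A₂* : κ̂ → P, let D₁, D₂ : κ → P (abstracting the linearizations ℓ_{A₁*(w)}, ℓ_{A₂*(w)}), let E₁, E₂ : P̂ → End_R(κ) (abstracting ψ ↦ ℓ_{A₁,ψ}, ℓ_{A₂,ψ}) with G₁(ψ), G₂(ψ) : κ̂ → κ̂ satisfying ⟨Gᵢ(ψ)(χ), φ⟩_κ = ⟨χ, Eᵢ(ψ)(φ)⟩_κ for all χ, φ, and let B₁*, B₂* : P̂ × P̂ → P̂. Assume: (i) ⟨ψ₂, ℓ_F(A₂ψ₁) − A₂*(ℓ_F*ψ₁)⟩_P = ⟨B₂*(ψ₂,ψ₁), F⟩_P for all ψ₁, ψ₂; (ii) ⟨ψ, Dᵢ(φ)⟩_P = ⟨Gᵢ(ψ)(w),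 φ⟩_κ for all ψ ∈ P̂, φ ∈ κ and i = 1, 2; (iii) E₁(α)(A₂β) − E₁(β)(A₂α) + E₂(α)(A₁β) − E₂(β)(A₁α) = A₁(B₂*(α,β)) + A₂(B₁*(α,β)) for all α, β ∈ P̂ (the Schouten bracket [[A₁,A₂]] vanishes). Then for all ψ₁, ψ₂ ∈ P̂: ⟨ψ₂, ℓ_F(A₂ψ₁) + D₁(A₂ψ₁) + D₂(A₁ψ₁)⟩_P − ⟨ψ₁, ℓ_F(A₂ψ₂) + D₁(A₂ψ₂) + D₂(A₁ψ₂)⟩_P = ⟨B₂*(ψ₂,ψ₁), F + A₁*(w)⟩_P + ⟨B₁*(ψ₂,ψ₁), A₂*(w)⟩_P. (Pairing-level form of the mixed identity (13) of Lemma 3.) -/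
/-- pairing-level form of the mixed identity (13) of Lemma 3. -/
theorem kupershmidt_lemma3_eq13
    {R P Phat K Khat Lambda : Type*} [CommRing R]
    [AddCommGroup P] [Module R P] [AddCommGroup Phat] [Module R Phat]
    [AddCommGroup K] [Module R K] [AddCommGroup Khat] [Module R Khat]
    [AddCommGroup Lambda] [Module R Lambda]
    (pP : Phat →ₗ[R] P →ₗ[R] Lambda) (pK : Khat →ₗ[R] K →ₗ[R] Lambda)
    (F : P) (w : Khat)
    (lF : K →ₗ[R] P) (lFs : Phat →ₗ[R] Khat)
    (hlF : ∀ (ψ : Phat) (φ : K), pP ψ (lF φ) = pK (lFs ψ) φ)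
    (A₁ A₂ : Phat →ₗ[R] K) (A₁s A₂s : Khat →ₗ[R] P)
    (hA₁ : ∀ (ψ : Phat) (χ : Khat), pP ψ (A₁s χ) = pK χ (A₁ ψ))
    (hA₂ : ∀ (ψ : Phat) (χ : Khat), pP ψ (A₂s χ) = pK χ (A₂ ψ))
    (D₁ D₂ : K →ₗ[R] P)
    (E₁ E₂ : Phat → Module.End R K)
    (G₁ G₂ : Phat → Khat → Khat)
    (hG₁ : ∀ (ψ : Phat) (χ : Khat) (φ : K), pK (G₁ ψ χ) φ = pK χ (E₁ ψ φ))
    (hG₂ : ∀ (ψ : Phat) (χ : Khat) (φ : K), pK (G₂ ψ χ) φ = pK χ (E₂ ψ φ))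
    (B₁s B₂s : Phat → Phat → Phat)
    (hi : ∀ ψ₁ ψ₂ : Phat,
      pP ψ₂ (lF (A₂ ψ₁) - A₂s (lFs ψ₁)) = pP (B₂s ψ₂ ψ₁) F)
    (hii₁ : ∀ (ψ : Phat) (φ : K), pP ψ (D₁ φ) = pK (G₁ ψ w) φ)
    (hii₂ : ∀ (ψ : Phat) (φ : K), pP ψ (D₂ φ) = pK (G₂ ψ w) φ)
    (hiii : ∀ α β : Phat,
      E₁ α (A₂ β) - E₁ β (A₂ α) + E₂ α (A₁ β) - E₂ β (A₁ α)
        = A₁ (B₂s α β) + A₂ (B₁s α β)) :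
    ∀ ψ₁ ψ₂ : Phat,
      pP ψ₂ (lF (A₂ ψ₁) + D₁ (A₂ ψ₁) + D₂ (A₁ ψ₁))
        - pP ψ₁ (lF (A₂ ψ₂) + D₁ (A₂ ψ₂) + D₂ (A₁ ψ₂))
        = pP (B₂s ψ₂ ψ₁) (F + A₁s w) + pP (B₁s ψ₂ ψ₁) (A₂s w) := by
  intro ψ₁ ψ₂
  have hi' := hi ψ₁ ψ₂
  rw [map_sub] at hi'
  have e1 : pP ψ₁ (lF (A₂ ψ₂)) = pP ψ₂ (A₂s (lFs ψ₁)) := by rw [hlF, hA₂]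
  have e2 : pP ψ₂ (D₁ (A₂ ψ₁)) = pK w (E₁ ψ₂ (A₂ ψ₁)) := by rw [hii₁, hG₁]
  have e3 : pP ψ₁ (D₁ (A₂ ψ₂)) = pK w (E₁ ψ₁ (A₂ ψ₂)) := by rw [hii₁, hG₁]
  have e4 : pP ψ₂ (D₂ (A₁ ψ₁)) = pK w (E₂ ψ₂ (A₁ ψ₁)) := by rw [hii₂, hG₂]
  have e5 : pP ψ₁ (D₂ (A₁ ψ₂)) = pK w (E₂ ψ₁ (A₁ ψ₂)) := by rw [hii₂, hG₂]
  have e6 := congrArg (pK w) (hiii ψ₂ ψ₁)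
  simp only [map_add, map_sub, LinearMap.add_apply, LinearMap.sub_apply,
    ← hA₁ (B₂s ψ₂ ψ₁) w, ← hA₂ (B₁s ψ₂ ψ₁) w] at e6
  have key : (pP ψ₂ (lF (A₂ ψ₁)) - pP ψ₂ (A₂s (lFs ψ₁)))
      + (pK w (E₁ ψ₂ (A₂ ψ₁)) - pK w (E₁ ψ₁ (A₂ ψ₂))
        + pK w (E₂ ψ₂ (A₁ ψ₁)) - pK w (E₂ ψ₁ (A₁ ψ₂)))
      = pP (B₂s ψ₂ ψ₁) F + (pP (B₂s ψ₂ ψ₁) (A₁s w) + pP (B₁s ψ₂ ψ₁) (A₂s w)) := by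
    rw [hi', e6]
  simp only [map_add]
  rw [e1, e2, e3, e4, e5]
  abel_nf at key ⊢
  exact key
end

section
/- Let w ∈ κ̂. Let A₂ : P̂ → κ have adjoint A₂* : κ̂ → P, let D₂ : κ → P (abstracting the linearization ℓ_{A₂*(w)}), let E₂ : P̂ → End_R(κ) (abstracting ψ ↦ ℓ_{A₂,ψ}) with G₂(ψ) : κ̂ → κ̂ satisfying ⟨G₂(ψ)(χ), φ⟩_κ = ⟨χ, E₂(ψ)(φ)⟩_κ for all χ, φ, and let B₂* : P̂ × P̂ → P̂. Assume: (i) ⟨ψ, D₂(φ)⟩_P = ⟨G₂(ψ)(w), φ⟩_κ for all ψ ∈ P̂, φ ∈ κ; (ii) E₂(α)(A₂β) − E₂(β)(A₂α) = A₂(B₂*(α,β)) for all α, β ∈ P̂ (A₂ is Hamiltonian). Then for all ψ₁, ψ₂ ∈ P̂: ⟨ψ₂, D₂(A₂ψ₁)⟩_P − ⟨ψ₁, D₂(A₂ψ₂)⟩_P = ⟨B₂*(ψ₂,ψ₁), A₂*(w)⟩_P. (Pairing-level form of identity (14) of Lemma 3: ℓ_{A₂*(w)}∘A₂ − A₂*∘ℓ*_{A₂*(w)}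 = B₂(A₂*(w), ·).) -/
/-- pairing-level form of identity (14) of Lemma 3:
`ℓ_{A₂*(w)} ∘ A₂ − A₂* ∘ ℓ*_{A₂*(w)} = B₂(A₂*(w), ·)`. -/
theorem kupershmidt_lemma3_eq14
    {R P Phat K Khat Lambda : Type*} [CommRing R]
    [AddCommGroup P] [Module R P] [AddCommGroup Phat] [Module R Phat]
    [AddCommGroup K] [Module R K] [AddCommGroup Khat] [Module R Khat]
    [AddCommGroup Lambda] [Module R Lambda]
    (pP : Phat →ₗ[R] P →ₗ[R] Lambda) (pK : Khat →ₗ[R] K →ₗ[R] Lambda)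
    (w : Khat)
    (A₂ : Phat →ₗ[R] K) (A₂s : Khat →ₗ[R] P)
    (hA₂ : ∀ (ψ : Phat) (χ : Khat), pP ψ (A₂s χ) = pK χ (A₂ ψ))
    (D₂ : K →ₗ[R] P)
    (E₂ : Phat → Module.End R K)
    (G₂ : Phat → Khat → Khat)
    (hG₂ : ∀ (ψ : Phat) (χ : Khat) (φ : K), pK (G₂ ψ χ) φ = pK χ (E₂ ψ φ))
    (B₂s : Phat → Phat → Phat)
    (hi : ∀ (ψ : Phat) (φ : K), pP ψ (D₂ φ) = pK (G₂ ψ w) φ)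
    (hii : ∀ α β : Phat, E₂ α (A₂ β) - E₂ β (A₂ α) = A₂ (B₂s α β)) :
    ∀ ψ₁ ψ₂ : Phat,
      pP ψ₂ (D₂ (A₂ ψ₁)) - pP ψ₁ (D₂ (A₂ ψ₂)) = pP (B₂s ψ₂ ψ₁) (A₂s w) := by
  intro ψ₁ ψ₂
  rw [hi, hi, hG₂, hG₂, hA₂, ← map_sub, ← hii ψ₂ ψ₁]
end

section
/- Set b₁₁ = ℓ₁∘a₁ − a₁*∘ℓ₁*, c = ℓ₁∘a₂ + ℓ₂∘a₁ − a₁*∘ℓ₂* − a₂*∘ℓ₁*, and b₂₂ = ℓ₂∘a₂ − a₂*∘ℓ₂* (all maps P̂ → P). Then for all (ψ, ψ') ∈ P̂ ⊕ P̂: (ℓ̃∘Ã₁ − Ã₁†∘ℓ̃†)(ψ, ψ') = (b₁₁(ψ) − b₁₁(ψ'), −b₁₁(ψ) − c(ψ') − b₂₂(ψ')). In the variational interpretation, with b₁₁ = B₁(F+A₁*(w),·), c = B₂(F+A₁*(w),·) + B₁(A₂*(w),·), b₂₂ = B₂(A₂*(w),·), this is the identity ℓ_{F̃}∘Ã₁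 − Ã₁*∘ℓ*_{F̃} = B̃₁(F̃, ·) of Proposition 4, which shows that Ã₁ defines a variational bivector on the Kupershmidt deformation F̃ = 0. -/
/-- Proposition 4, identity (20) for `Ã₁`:
`ℓ̃∘Ã₁ − Ã₁†∘ℓ̃† = (b₁₁(ψ) − b₁₁(ψ'), −b₁₁(ψ) − c(ψ') − b₂₂(ψ'))`. -/
theorem kupershmidt_prop4_A1
    {R P Phat K Khat : Type*} [CommRing R]
    [AddCommGroup P] [Module R P] [AddCommGroup Phat] [Module R Phat]
    [AddCommGroup K] [Module R K] [AddCommGroup Khat] [Module R Khat]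
    (l₁ l₂ : K →ₗ[R] P) (l₁s l₂s : Phat →ₗ[R] Khat)
    (a₁ a₂ : Phat →ₗ[R] K) (a₁s a₂s : Khat →ₗ[R] P)
    -- the block maps of the Kupershmidt deformation
    (ltil : K × Khat → P × P)
    (hltil : ∀ x : K × Khat, ltil x = (l₁ x.1 + a₁s x.2, l₂ x.1 + a₂s x.2))
    (ltild : Phat × Phat → Khat × K)
    (hltild : ∀ x : Phat × Phat, ltild x = (l₁s x.1 + l₂s x.2, a₁ x.1 + a₂ x.2))
    (Atil₁ : Phat × Phat → K × Khat)
    (hAtil₁ : ∀ x : Phat × Phat, Atil₁ x = (a₁ x.1 - a₁ x.2, l₁s x.2 + l₂s x.2))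
    (Atil₁d : Khat × K → P × P)
    (hAtil₁d : ∀ x : Khat × K, Atil₁d x = (a₁s x.1, -a₁s x.1 + (l₁ x.2 + l₂ x.2)))
    -- the defect operators
    (b₁₁ c b₂₂ : Phat → P)
    (hb₁₁ : ∀ ψ : Phat, b₁₁ ψ = l₁ (a₁ ψ) - a₁s (l₁s ψ))
    (hc : ∀ ψ : Phat, c ψ = l₁ (a₂ ψ) + l₂ (a₁ ψ) - a₁s (l₂s ψ) - a₂s (l₁s ψ))
    (hb₂₂ : ∀ ψ : Phat, b₂₂ ψ = l₂ (a₂ ψ) - a₂s (l₂s ψ)) :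
    ∀ ψ ψ' : Phat,
      ltil (Atil₁ (ψ, ψ')) - Atil₁d (ltild (ψ, ψ'))
        = (b₁₁ ψ - b₁₁ ψ', -b₁₁ ψ - c ψ' - b₂₂ ψ') := by
  intro ψ ψ'
  simp only [hltil, hltild, hAtil₁, hAtil₁d, hb₁₁, hc, hb₂₂, Prod.mk_sub_mk, Prod.mk.injEq,
    map_add, map_sub]
  constructor <;> abel
end

section
/- Set b₁₁ = ℓ₁∘a₁ − a₁*∘ℓ₁*, c = ℓ₁∘a₂ + ℓ₂∘a₁ − a₁*∘ℓ₂* − a₂*∘ℓ₁*, and b₂₂ = ℓ₂∘a₂ − a₂*∘ℓ₂* (all maps P̂ → P). Then for all (ψ, ψ') ∈ P̂ ⊕ P̂: (ℓ̃∘Ã₂ − Ã₂†∘ℓ̃†)(ψ, ψ') = (b₁₁(ψ) + c(ψ) + b₂₂(ψ'), b₂₂(ψ) − b₂₂(ψ')). In the variational interpretation, with b₁₁ = B₁(F+A₁*(w),·), c = B₂(F+A₁*(w),·) + B₁(A₂*(w),·), b₂₂ = B₂(A₂*(w),·), this is the identity ℓ_{F̃}∘Ã₂ − Ã₂*∘ℓ*_{F̃}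 = B̃₂(F̃, ·) of Proposition 4, which shows that Ã₂ defines a variational bivector on the Kupershmidt deformation F̃ = 0. -/
/-- Proposition 4, identity (21) for `Ã₂`:
`ℓ̃∘Ã₂ − Ã₂†∘ℓ̃† = (b₁₁(ψ) + c(ψ) + b₂₂(ψ'), b₂₂(ψ) − b₂₂(ψ'))`. -/
theorem kupershmidt_prop4_A2
    {R P Phat K Khat : Type*} [CommRing R]
    [AddCommGroup P] [Module R P] [AddCommGroup Phat] [Module R Phat]
    [AddCommGroup K] [Module R K] [AddCommGroup Khat] [Module R Khat]
    (l₁ l₂ : K →ₗ[R] P) (l₁s l₂s : Phat →ₗ[R] Khat)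
    (a₁ a₂ : Phat →ₗ[R] K) (a₁s a₂s : Khat →ₗ[R] P)
    -- the block maps of the Kupershmidt deformation
    (ltil : K × Khat → P × P)
    (hltil : ∀ x : K × Khat, ltil x = (l₁ x.1 + a₁s x.2, l₂ x.1 + a₂s x.2))
    (ltild : Phat × Phat → Khat × K)
    (hltild : ∀ x : Phat × Phat, ltild x = (l₁s x.1 + l₂s x.2, a₁ x.1 + a₂ x.2))
    (Atil₂ : Phat × Phat → K × Khat)
    (hAtil₂ : ∀ x : Phat × Phat, Atil₂ x = (a₂ x.1 - a₂ x.2, -(l₁s x.1 + l₂s x.1)))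
    (Atil₂d : Khat × K → P × P)
    (hAtil₂d : ∀ x : Khat × K, Atil₂d x = (a₂s x.1 - (l₁ x.2 + l₂ x.2), -a₂s x.1))
    -- the defect operators
    (b₁₁ c b₂₂ : Phat → P)
    (hb₁₁ : ∀ ψ : Phat, b₁₁ ψ = l₁ (a₁ ψ) - a₁s (l₁s ψ))
    (hc : ∀ ψ : Phat, c ψ = l₁ (a₂ ψ) + l₂ (a₁ ψ) - a₁s (l₂s ψ) - a₂s (l₁s ψ))
    (hb₂₂ : ∀ ψ : Phat, b₂₂ ψ = l₂ (a₂ ψ) - a₂s (l₂s ψ)) :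
    ∀ ψ ψ' : Phat,
      ltil (Atil₂ (ψ, ψ')) - Atil₂d (ltild (ψ, ψ'))
        = (b₁₁ ψ + c ψ + b₂₂ ψ', b₂₂ ψ - b₂₂ ψ') := by
  intro ψ ψ'
  simp only [hltil, hltild, hAtil₂, hAtil₂d, hb₁₁, hc, hb₂₂, Prod.mk_sub_mk,
    map_add, map_sub, map_neg]
  exact Prod.ext (by abel) (by abel)
end

section
/- Assume ℓ₁∘a₁ = a₁*∘ℓ₁*, ℓ₂∘a₂ = a₂*∘ℓ₂*, and ℓ₁∘a₂ + ℓ₂∘a₁ = a₁*∘ℓ₂* + a₂*∘ℓ₁* (the identities of Lemma 3 restricted to the Kupershmidt deformation). Then ℓ̃∘Ã₁ = Ã₁†∘ℓ̃† and ℓ̃∘Ã₂ = Ã₂†∘ℓ̃†. (This is the variational-bivector condition ℓ_{Ẽ}∘Ã = Ã*∘ℓ*_{Ẽ} for Ã₁ and Ã₂ on the Kupershmidt deformation, the final claim of Proposition 4.) -/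
/-- final claim of Proposition 4: under the restricted Lemma 3
identities, `ℓ̃∘Ã₁ = Ã₁†∘ℓ̃†` and `ℓ̃∘Ã₂ = Ã₂†∘ℓ̃†`, i.e. `Ã₁` and `Ã₂` are
variational bivectors on the Kupershmidt deformation. -/
theorem kupershmidt_prop4_bivectors
    {R P Phat K Khat : Type*} [CommRing R]
    [AddCommGroup P] [Module R P] [AddCommGroup Phat] [Module R Phat]
    [AddCommGroup K] [Module R K] [AddCommGroup Khat] [Module R Khat]
    (l₁ l₂ : K →ₗ[R] P) (l₁s l₂s : Phat →ₗ[R] Khat)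
    (a₁ a₂ : Phat →ₗ[R] K) (a₁s a₂s : Khat →ₗ[R] P)
    -- the block maps of the Kupershmidt deformation
    (ltil : K × Khat → P × P)
    (hltil : ∀ x : K × Khat, ltil x = (l₁ x.1 + a₁s x.2, l₂ x.1 + a₂s x.2))
    (ltild : Phat × Phat → Khat × K)
    (hltild : ∀ x : Phat × Phat, ltild x = (l₁s x.1 + l₂s x.2, a₁ x.1 + a₂ x.2))
    (Atil₁ : Phat × Phat → K × Khat)
    (hAtil₁ : ∀ x : Phat × Phat, Atil₁ x = (a₁ x.1 - a₁ x.2, l₁s x.2 + l₂s x.2))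
    (Atil₁d : Khat × K → P × P)
    (hAtil₁d : ∀ x : Khat × K, Atil₁d x = (a₁s x.1, -a₁s x.1 + (l₁ x.2 + l₂ x.2)))
    (Atil₂ : Phat × Phat → K × Khat)
    (hAtil₂ : ∀ x : Phat × Phat, Atil₂ x = (a₂ x.1 - a₂ x.2, -(l₁s x.1 + l₂s x.1)))
    (Atil₂d : Khat × K → P × P)
    (hAtil₂d : ∀ x : Khat × K, Atil₂d x = (a₂s x.1 - (l₁ x.2 + l₂ x.2), -a₂s x.1))
    -- the identities of Lemma 3 restricted to the Kupershmidt deformation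
    (h11 : ∀ ψ : Phat, l₁ (a₁ ψ) = a₁s (l₁s ψ))
    (h22 : ∀ ψ : Phat, l₂ (a₂ ψ) = a₂s (l₂s ψ))
    (h12 : ∀ ψ : Phat, l₁ (a₂ ψ) + l₂ (a₁ ψ) = a₁s (l₂s ψ) + a₂s (l₁s ψ)) :
    (∀ x : Phat × Phat, ltil (Atil₁ x) = Atil₁d (ltild x)) ∧
    (∀ x : Phat × Phat, ltil (Atil₂ x) = Atil₂d (ltild x)) := by
  simp only [hltil, hltild, hAtil₁, hAtil₁d, hAtil₂, hAtil₂d]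
  refine ⟨fun x => ?_, fun x => ?_⟩ <;>
    simp only [map_add, map_sub, map_neg, Prod.mk.injEq] <;> constructor
  · linear_combination (norm := abel) h11 x.1 - h11 x.2
  · linear_combination (norm := abel) -h11 x.1 - h22 x.2 - h12 x.2
  · linear_combination (norm := abel) h12 x.1 + h11 x.1 + h22 x.2
  · linear_combination (norm := abel) h22 x.1 - h22 x.2
end

section
/- Let B₁, B₂ : P × P̂ → P and B₁*, B₂* : P̂ × P̂ → P̂ be maps, R-linear in each argument, such that ⟨ψ, Bᵢ(p, χ)⟩_P = ⟨Bᵢ*(ψ, χ), p⟩_P for all ψ, χ ∈ P̂, p ∈ P, i = 1, 2 (Bᵢ* is adjoint to Bᵢ in the first argument). Define B̃₁ : (P ⊕ P) × (P̂ ⊕ P̂) → P ⊕ P by B̃₁((p,p'),(ψ₂,ψ₂')) = (B₁(p,ψ₂) − B₁(p,ψ₂'), −B₁(p,ψ₂) − B₂(p,ψ₂') − B₁(p',ψ₂') − B₂(p',ψ₂')) (formula (22) of the paper), and define B̃₁* : (P̂ ⊕ P̂) × (P̂ ⊕ P̂) → P̂ ⊕ P̂ by B̃₁*((ψ₁,ψ₁'),(ψ₂,ψ₂'))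 = (B₁*(ψ₁,ψ₂) − B₁*(ψ₁,ψ₂') − B₁*(ψ₁',ψ₂) − B₂*(ψ₁',ψ₂'), −B₁*(ψ₁',ψ₂') − B₂*(ψ₁',ψ₂')) (formula (26)). Then, for the direct-sum pairing ⟨(ψ,ψ'),(p,p')⟩ = ⟨ψ,p⟩_P + ⟨ψ',p'⟩_P, B̃₁* is adjoint to B̃₁ in the first argument: ⟨(ψ₁,ψ₁'), B̃₁((p,p'),(ψ₂,ψ₂'))⟩ = ⟨B̃₁*((ψ₁,ψ₁'),(ψ₂,ψ₂')), (p,p')⟩ for all arguments. (Lemma 6 of the paper, first formula.) -/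
/-- Lemma 6 of the paper, first formula: `B̃₁*` (formula (26)) is
adjoint in the first argument to `B̃₁` (formula (22)) for the direct-sum pairing. -/
theorem kupershmidt_lemma6_B1
    {R P Phat Lambda : Type*} [CommRing R]
    [AddCommGroup P] [Module R P] [AddCommGroup Phat] [Module R Phat]
    [AddCommGroup Lambda] [Module R Lambda]
    (pP : Phat →ₗ[R] P →ₗ[R] Lambda)
    (B₁ B₂ : P →ₗ[R] Phat →ₗ[R] P)
    (B₁s B₂s : Phat →ₗ[R] Phat →ₗ[R] Phat)
    (hB₁ : ∀ (ψ χ : Phat) (p : P), pP ψ (B₁ p χ) = pP (B₁s ψ χ) p)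
    (hB₂ : ∀ (ψ χ : Phat) (p : P), pP ψ (B₂ p χ) = pP (B₂s ψ χ) p)
    (Btil₁ : P × P → Phat × Phat → P × P)
    (hBtil₁ : ∀ (pp : P × P) (ψψ : Phat × Phat),
      Btil₁ pp ψψ = (B₁ pp.1 ψψ.1 - B₁ pp.1 ψψ.2,
        -B₁ pp.1 ψψ.1 - B₂ pp.1 ψψ.2 - B₁ pp.2 ψψ.2 - B₂ pp.2 ψψ.2))
    (Btil₁s : Phat × Phat → Phat × Phat → Phat × Phat)
    (hBtil₁s : ∀ ψψ₁ ψψ₂ : Phat × Phat,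
      Btil₁s ψψ₁ ψψ₂ = (B₁s ψψ₁.1 ψψ₂.1 - B₁s ψψ₁.1 ψψ₂.2
          - B₁s ψψ₁.2 ψψ₂.1 - B₂s ψψ₁.2 ψψ₂.2,
        -B₁s ψψ₁.2 ψψ₂.2 - B₂s ψψ₁.2 ψψ₂.2)) :
    ∀ (ψ₁ ψ₁' ψ₂ ψ₂' : Phat) (p p' : P),
      pP ψ₁ (Btil₁ (p, p') (ψ₂, ψ₂')).1 + pP ψ₁' (Btil₁ (p, p') (ψ₂, ψ₂')).2
        = pP (Btil₁s (ψ₁, ψ₁') (ψ₂, ψ₂')).1 p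
          + pP (Btil₁s (ψ₁, ψ₁') (ψ₂, ψ₂')).2 p' := by
  intro ψ₁ ψ₁' ψ₂ ψ₂' p p'
  rw [hBtil₁, hBtil₁s]
  simp only [map_sub, map_neg, LinearMap.sub_apply, LinearMap.neg_apply, hB₁, hB₂]
  abel
end

section
/- Let B₁, B₂ : P × P̂ → P and B₁*, B₂* : P̂ × P̂ → P̂ be maps, R-linear in each argument, such that ⟨ψ, Bᵢ(p, χ)⟩_P = ⟨Bᵢ*(ψ, χ), p⟩_P for all ψ, χ ∈ P̂, p ∈ P, i = 1, 2 (Bᵢ* is adjoint to Bᵢ in the first argument). Define B̃₂ : (P ⊕ P) × (P̂ ⊕ P̂) → P ⊕ P by B̃₂((p,p'),(ψ₂,ψ₂')) = (B₁(p,ψ₂) + B₂(p,ψ₂) + B₁(p',ψ₂) + B₂(p',ψ₂'), B₂(p',ψ₂) − B₂(p',ψ₂')) (formula (23) of the paper), and define B̃₂* : (P̂ ⊕ P̂) × (P̂ ⊕ P̂) → P̂ ⊕ P̂ by B̃₂*((ψ₁,ψ₁'),(ψ₂,ψ₂')) = (B₁*(ψ₁,ψ₂) + B₂*(ψ₁,ψ₂),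 B₁*(ψ₁,ψ₂) + B₂*(ψ₁,ψ₂') + B₂*(ψ₁',ψ₂) − B₂*(ψ₁',ψ₂')) (formula (27)). Then, for the direct-sum pairing ⟨(ψ,ψ'),(p,p')⟩ = ⟨ψ,p⟩_P + ⟨ψ',p'⟩_P, B̃₂* is adjoint to B̃₂ in the first argument: ⟨(ψ₁,ψ₁'), B̃₂((p,p'),(ψ₂,ψ₂'))⟩ = ⟨B̃₂*((ψ₁,ψ₁'),(ψ₂,ψ₂')), (p,p')⟩ for all arguments. (Lemma 6 of the paper, second formula.) -/
/-- Lemma 6 of the paper, second formula: `B̃₂*` (formula (27)) is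
adjoint in the first argument to `B̃₂` (formula (23)) for the direct-sum pairing. -/
theorem kupershmidt_lemma6_B2
    {R P Phat Lambda : Type*} [CommRing R]
    [AddCommGroup P] [Module R P] [AddCommGroup Phat] [Module R Phat]
    [AddCommGroup Lambda] [Module R Lambda]
    (pP : Phat →ₗ[R] P →ₗ[R] Lambda)
    (B₁ B₂ : P →ₗ[R] Phat →ₗ[R] P)
    (B₁s B₂s : Phat →ₗ[R] Phat →ₗ[R] Phat)
    (hB₁ : ∀ (ψ χ : Phat) (p : P), pP ψ (B₁ p χ) = pP (B₁s ψ χ) p)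
    (hB₂ : ∀ (ψ χ : Phat) (p : P), pP ψ (B₂ p χ) = pP (B₂s ψ χ) p)
    (Btil₂ : P × P → Phat × Phat → P × P)
    (hBtil₂ : ∀ (pp : P × P) (ψψ : Phat × Phat),
      Btil₂ pp ψψ = (B₁ pp.1 ψψ.1 + B₂ pp.1 ψψ.1 + B₁ pp.2 ψψ.1 + B₂ pp.2 ψψ.2,
        B₂ pp.2 ψψ.1 - B₂ pp.2 ψψ.2))
    (Btil₂s : Phat × Phat → Phat × Phat → Phat × Phat)
    (hBtil₂s : ∀ ψψ₁ ψψ₂ : Phat × Phat,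
      Btil₂s ψψ₁ ψψ₂ = (B₁s ψψ₁.1 ψψ₂.1 + B₂s ψψ₁.1 ψψ₂.1,
        B₁s ψψ₁.1 ψψ₂.1 + B₂s ψψ₁.1 ψψ₂.2
          + B₂s ψψ₁.2 ψψ₂.1 - B₂s ψψ₁.2 ψψ₂.2)) :
    ∀ (ψ₁ ψ₁' ψ₂ ψ₂' : Phat) (p p' : P),
      pP ψ₁ (Btil₂ (p, p') (ψ₂, ψ₂')).1 + pP ψ₁' (Btil₂ (p, p') (ψ₂, ψ₂')).2
        = pP (Btil₂s (ψ₁, ψ₁') (ψ₂, ψ₂')).1 p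
          + pP (Btil₂s (ψ₁, ψ₁') (ψ₂, ψ₂')).2 p' := by
  intro ψ₁ ψ₁' ψ₂ ψ₂' p p'
  simp only [hBtil₂, hBtil₂s, map_add, map_sub, LinearMap.add_apply, LinearMap.sub_apply, hB₁, hB₂]
  abel
end

section
/- Let A₁, A₂ : P̂ → κ have adjoints A₁*, A₂* : κ̂ → P, let F ∈ P and w ∈ κ̂, and let ψᵢ, ψᵢ₊₁ ∈ P̂ satisfy A₁(ψᵢ) = A₂(ψᵢ₊₁) (the Magri-hierarchy relation for the generating functions of a hierarchy of conservation laws of the equation F = 0). Then ⟨ψᵢ, F + A₁*(w)⟩_P − ⟨ψᵢ₊₁, A₂*(w)⟩_P = ⟨ψᵢ, F⟩_P. Consequently, if ωᵢ is a conservation law of F = 0 with generating function ψᵢ, i.e. d̄ωᵢ = ⟨ψᵢ, F⟩, then the pair (ψᵢ, −ψᵢ₊₁) is the generating function of a conservation law of the Kupershmidt deformation F + A₁*(w) = 0, A₂*(w) = 0. (The first part of Theorem 8 of the paper.) -/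
/-- first part of Theorem 8: if `A₁ ψᵢ = A₂ ψᵢ₊₁`, then
`⟨ψᵢ, F + A₁*(w)⟩ − ⟨ψᵢ₊₁, A₂*(w)⟩ = ⟨ψᵢ, F⟩`; equivalently
`⟨ψᵢ, F + A₁*(w)⟩ + ⟨−ψᵢ₊₁, A₂*(w)⟩ = ⟨ψᵢ, F⟩`, so the pair `(ψᵢ, −ψᵢ₊₁)` is the
generating function of a conservation law of the Kupershmidt deformation. -/
theorem kupershmidt_thm8_conservation_law
    {R P Phat K Khat Lambda : Type*} [CommRing R]
    [AddCommGroup P] [Module R P] [AddCommGroup Phat] [Module R Phat]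
    [AddCommGroup K] [Module R K] [AddCommGroup Khat] [Module R Khat]
    [AddCommGroup Lambda] [Module R Lambda]
    (pP : Phat →ₗ[R] P →ₗ[R] Lambda) (pK : Khat →ₗ[R] K →ₗ[R] Lambda)
    (A₁ A₂ : Phat →ₗ[R] K) (A₁s A₂s : Khat →ₗ[R] P)
    (hA₁ : ∀ (ψ : Phat) (χ : Khat), pP ψ (A₁s χ) = pK χ (A₁ ψ))
    (hA₂ : ∀ (ψ : Phat) (χ : Khat), pP ψ (A₂s χ) = pK χ (A₂ ψ))
    (F : P) (w : Khat)
    (ψi ψi1 : Phat)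
    (hMagri : A₁ ψi = A₂ ψi1) :
    pP ψi (F + A₁s w) - pP ψi1 (A₂s w) = pP ψi F ∧
    pP ψi (F + A₁s w) + pP (-ψi1) (A₂s w) = pP ψi F := by
  have h : pP ψi (F + A₁s w) - pP ψi1 (A₂s w) = pP ψi F := by
    simp [map_add, hA₁, hA₂, hMagri]
  exact ⟨h, by simpa [sub_eq_add_neg] using h⟩
end
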